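/- Theorem 5.2(iii) (uniqueness of the extension with a given real eigenvalue). Assume Im V(x) ≥ 0 for almost every x ∈ (0,2π) and Im V(x) > 0 on a set of positive Lebesgue measure. Let λ ∈ ℝ, and for j = 1, 2 let ρ_j ∈ ℂ, k_j ∈ L²((0,2π); ℂ), and let f_j : [0,2π] → ℂ be not identically zero and absolutely continuous with derivative f_j′, satisfying f_j(0) = ρ_j f_j(2π) and, for almost every x ∈ (0,2π), both i f_j′(x) + V(x) f_j(x) + f_j(2π) k_j(x) = λ f_j(x) and i f_j′(x) + conj(V(x)) f_j(x) = λ f_j(x). Then ρ₁ = ρ₂ and k₁(x) = k₂(x) for almost every x ∈ (0,2π). -/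

import Mathlib

open MeasureTheory Real Complex intervalIntegral

/-- `f : [0,2π] → ℂ` is absolutely continuous with derivative `f'`:
`f' ∈ L¹(0,2π)` and `f x = f 0 + ∫₀ˣ f'` for all `x ∈ [0,2π]`. -/
def IsACWithDeriv (f f' : ℝ → ℂ) : Prop :=
  MeasureTheory.IntegrableOn f' (Set.Ioc 0 (2 * Real.pi)) ∧
    ∀ x ∈ Set.Icc (0:ℝ) (2 * Real.pi), f x = f 0 + ∫ t in (0:ℝ)..x, f' t

lemma abs_integral_abs_pow (y x : ℝ) (n : ℕ) :
    |∫ t in y..x, |t - y| ^ n| = |x - y| ^ (n + 1) / (n + 1) := by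
  have h1 : (∫ t in y..x, |t - y| ^ n) = ∫ s in (0:ℝ)..(x - y), |s| ^ n := by
    have := intervalIntegral.integral_comp_sub_right (a := y) (b := x)
      (fun s => |s| ^ n) y
    simpa using this
  rw [h1]
  set u := x - y with hu
  rcases le_or_gt 0 u with h | h
  · have he : Set.EqOn (fun s => |s| ^ n) (fun s => s ^ n) (Set.uIcc 0 u) := by
      intro s hs
      rw [Set.uIcc_of_le h] at hs
      simp [_root_.abs_of_nonneg hs.1]
    rw [intervalIntegral.integral_congr he, integral_pow, _root_.abs_of_nonneg h,
      zero_pow (Nat.succ_ne_zero n), sub_zero, _root_.abs_of_nonneg (by positivity)]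
  · have he : Set.EqOn (fun s => |s| ^ n) (fun s => (-s) ^ n) (Set.uIcc 0 u) := by
      intro s hs
      rw [Set.uIcc_of_ge h.le] at hs
      simp [_root_.abs_of_nonpos hs.2]
    rw [intervalIntegral.integral_congr he]
    have h2 : (∫ s in (0:ℝ)..u, (-s) ^ n) = (-1:ℝ)^n * ((u ^ (n+1) - 0 ^ (n+1)) / (n + 1)) := by
      rw [← integral_pow]
      rw [← intervalIntegral.integral_const_mul]
      congr 1 with s
      ring
    rw [h2, abs_mul, abs_div, _root_.abs_pow (-1:ℝ), abs_neg, abs_one, one_pow, one_mul,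
      _root_.abs_of_nonneg (by positivity : (0:ℝ) ≤ (n:ℝ)+1), zero_pow (Nat.succ_ne_zero n),
      sub_zero, _root_.abs_pow]

lemma vanish_of_zero (g g' : ℝ → ℂ) (hg : IsACWithDeriv g g') (M : ℝ) (hM : 0 ≤ M)
    (hb : ∀ᵐ t ∂(MeasureTheory.volume.restrict (Set.Ioo 0 (2 * Real.pi))),
      ‖g' t‖ ≤ M * ‖g t‖)
    (y : ℝ) (hy : y ∈ Set.Icc (0:ℝ) (2 * Real.pi)) (hgy : g y = 0) :
    ∀ x ∈ Set.Icc (0:ℝ) (2 * Real.pi), g x = 0 := by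
  have hππ : (0:ℝ) ≤ 2 * Real.pi := by positivity
  -- interval integrability
  have hii : ∀ a ∈ Set.Icc (0:ℝ) (2 * Real.pi), ∀ b ∈ Set.Icc (0:ℝ) (2 * Real.pi),
      IntervalIntegrable g' MeasureTheory.volume a b := by
    intro a ha b hb'
    rw [intervalIntegrable_iff]
    exact hg.1.mono_set (Set.Ioc_subset_Ioc (le_min ha.1 hb'.1) (max_le ha.2 hb'.2))
  have hdiff : ∀ x ∈ Set.Icc (0:ℝ) (2 * Real.pi), g x = ∫ t in y..x, g' t := by
    intro x hx
    have h1 := hg.2 x hx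
    have h2 := hg.2 y hy
    rw [hgy] at h2
    have h3 := intervalIntegral.integral_interval_sub_left
      (hii 0 (Set.left_mem_Icc.2 hππ) x hx) (hii 0 (Set.left_mem_Icc.2 hππ) y hy)
    calc g x = (g 0 + ∫ t in (0:ℝ)..x, g' t) - (g 0 + ∫ t in (0:ℝ)..y, g' t) := by
          rw [← h1, ← h2]; ring
      _ = ∫ t in y..x, g' t := by rw [← h3]; ring
  set C : ℝ := ‖g 0‖ + ∫ t in Set.Ioc (0:ℝ) (2 * Real.pi), ‖g' t‖ with hC
  have hC0 : 0 ≤ C := by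
    apply add_nonneg (norm_nonneg _)
    exact MeasureTheory.integral_nonneg fun t => norm_nonneg _
  have hCb : ∀ x ∈ Set.Icc (0:ℝ) (2 * Real.pi), ‖g x‖ ≤ C := by
    intro x hx
    rw [hg.2 x hx]
    refine (norm_add_le _ _).trans (add_le_add le_rfl ?_)
    refine (intervalIntegral.norm_integral_le_integral_norm_uIoc).trans ?_
    apply MeasureTheory.setIntegral_mono_set (hg.1.norm)
    · exact Filter.Eventually.of_forall fun t => norm_nonneg _
    · exact HasSubset.Subset.eventuallyLE
        (Set.Ioc_subset_Ioc (le_min le_rfl hx.1) (max_le hππ hx.2))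
  -- a.e. bound on volume, on Ioc
  have hb2 : ∀ᵐ t ∂(MeasureTheory.volume : MeasureTheory.Measure ℝ),
      t ∈ Set.Ioc (0:ℝ) (2 * Real.pi) → ‖g' t‖ ≤ M * ‖g t‖ := by
    have hb' := (MeasureTheory.ae_restrict_iff' measurableSet_Ioo).1 hb
    have h2π : ∀ᵐ t ∂(MeasureTheory.volume : MeasureTheory.Measure ℝ),
        t ≠ 2 * Real.pi := by
      refine MeasureTheory.ae_iff.2 ?_
      simp
    filter_upwards [hb', h2π] with t h1 h2 ht
    exact h1 ⟨ht.1, lt_of_le_of_ne ht.2 h2⟩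
  have key : ∀ n : ℕ, ∀ x ∈ Set.Icc (0:ℝ) (2 * Real.pi),
      ‖g x‖ ≤ C * (M * |x - y|) ^ n / n.factorial := by
    intro n
    induction n with
    | zero => intro x hx; simpa using hCb x hx
    | succ n ih =>
      intro x hx
      rw [hdiff x hx]
      have hsub : Set.uIoc y x ⊆ Set.Ioc (0:ℝ) (2 * Real.pi) :=
        Set.Ioc_subset_Ioc (le_min hy.1 hx.1) (max_le hy.2 hx.2)
      have hsub' : Set.uIoc y x ⊆ Set.Icc (0:ℝ) (2 * Real.pi) :=
        hsub.trans Set.Ioc_subset_Icc_self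
      have haemem : ∀ᵐ t ∂(MeasureTheory.volume.restrict (Set.uIoc y x)),
        t ∈ Set.uIoc y x := MeasureTheory.ae_restrict_mem measurableSet_uIoc
      have hbd : ∀ᵐ t ∂(MeasureTheory.volume.restrict (Set.uIoc y x)),
          ‖g' t‖ ≤ (C * M ^ (n + 1) / n.factorial) * |t - y| ^ n := by
        filter_upwards [MeasureTheory.ae_restrict_of_ae hb2, haemem] with t h1 ht
        have h3 := h1 (hsub ht)
        have h4 := ih t (hsub' ht)
        calc ‖g' t‖ ≤ M * ‖g t‖ := h3
          _ ≤ M * (C * (M * |t - y|) ^ n / n.factorial) := by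
              exact mul_le_mul_of_nonneg_left h4 hM
          _ = (C * M ^ (n + 1) / n.factorial) * |t - y| ^ n := by
              rw [mul_pow]; ring
      have hcont : IntervalIntegrable
          (fun t => (C * M ^ (n + 1) / n.factorial) * |t - y| ^ n)
          MeasureTheory.volume y x := by
        apply Continuous.intervalIntegrable
        exact continuous_const.mul (((continuous_id.sub continuous_const).abs).pow n)
      refine (intervalIntegral.norm_integral_le_abs_of_norm_le hbd hcont).trans ?_
      rw [intervalIntegral.integral_const_mul, abs_mul,
        _root_.abs_of_nonneg (by positivity : (0:ℝ) ≤ C * M ^ (n + 1) / n.factorial),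
        abs_integral_abs_pow]
      rw [Nat.factorial_succ, mul_pow]
      push_cast
      rw [div_mul_div_comm]
      ring_nf
      apply le_of_eq
      ring
  intro x hx
  rw [← norm_le_zero_iff]
  have hlim : Filter.Tendsto (fun n : ℕ => C * (M * |x - y|) ^ n / n.factorial)
      Filter.atTop (nhds 0) := by
    have := (FloorSemiring.tendsto_pow_div_factorial_atTop (M * |x - y|)).const_mul C
    simpa [mul_div_assoc] using this
  exact ge_of_tendsto' hlim fun n => key n x hx
/-- Theorem 5.2(iii) (uniqueness of the extension with a given real eigenvalue): if for
`j = 1,2` the nonzero function `f_j` satisfies `f_j(0) = ρ_j f_j(2π)`,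
`i f_j' + V f_j + f_j(2π) k_j = λ f_j` and `i f_j' + conj(V) f_j = λ f_j` a.e., then
`ρ₁ = ρ₂` and `k₁ = k₂` a.e. on `(0,2π)`. -/
theorem uniqueness_of_extension_with_real_eigenvalue
    (V : ℝ → ℂ)
    (hV : MeasureTheory.MemLp V ⊤ (MeasureTheory.volume.restrict (Set.Ioo 0 (2 * Real.pi))))
    (hVI : ∀ᵐ x ∂(MeasureTheory.volume.restrict (Set.Ioo 0 (2 * Real.pi))), 0 ≤ (V x).im)
    (hVIpos : 0 < MeasureTheory.volume {x ∈ Set.Ioo (0:ℝ) (2 * Real.pi) | 0 < (V x).im})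
    (lam : ℝ) (ρ₁ ρ₂ : ℂ) (k₁ k₂ : ℝ → ℂ)
    (hk₁ : MeasureTheory.MemLp k₁ 2 (MeasureTheory.volume.restrict (Set.Ioo 0 (2 * Real.pi))))
    (hk₂ : MeasureTheory.MemLp k₂ 2 (MeasureTheory.volume.restrict (Set.Ioo 0 (2 * Real.pi))))
    (f₁ f₁' f₂ f₂' : ℝ → ℂ)
    (hf₁ : IsACWithDeriv f₁ f₁') (hf₁0 : ∃ x ∈ Set.Icc (0:ℝ) (2 * Real.pi), f₁ x ≠ 0)
    (hf₂ : IsACWithDeriv f₂ f₂') (hf₂0 : ∃ x ∈ Set.Icc (0:ℝ) (2 * Real.pi), f₂ x ≠ 0)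
    (hbc₁ : f₁ 0 = ρ₁ * f₁ (2 * Real.pi)) (hbc₂ : f₂ 0 = ρ₂ * f₂ (2 * Real.pi))
    (heq₁ : ∀ᵐ x ∂(MeasureTheory.volume.restrict (Set.Ioo 0 (2 * Real.pi))),
      Complex.I * f₁' x + V x * f₁ x + f₁ (2 * Real.pi) * k₁ x = (lam : ℂ) * f₁ x)
    (hadj₁ : ∀ᵐ x ∂(MeasureTheory.volume.restrict (Set.Ioo 0 (2 * Real.pi))),
      Complex.I * f₁' x + (starRingEnd ℂ) (V x) * f₁ x = (lam : ℂ) * f₁ x)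
    (heq₂ : ∀ᵐ x ∂(MeasureTheory.volume.restrict (Set.Ioo 0 (2 * Real.pi))),
      Complex.I * f₂' x + V x * f₂ x + f₂ (2 * Real.pi) * k₂ x = (lam : ℂ) * f₂ x)
    (hadj₂ : ∀ᵐ x ∂(MeasureTheory.volume.restrict (Set.Ioo 0 (2 * Real.pi))),
      Complex.I * f₂' x + (starRingEnd ℂ) (V x) * f₂ x = (lam : ℂ) * f₂ x) :
    ρ₁ = ρ₂ ∧
      ∀ᵐ x ∂(MeasureTheory.volume.restrict (Set.Ioo 0 (2 * Real.pi))), k₁ x = k₂ x := by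
  have hππ : (0:ℝ) ≤ 2 * Real.pi := by positivity
  have h0mem : (0:ℝ) ∈ Set.Icc (0:ℝ) (2 * Real.pi) := Set.left_mem_Icc.2 hππ
  have hTmem : (2 * Real.pi) ∈ Set.Icc (0:ℝ) (2 * Real.pi) := Set.right_mem_Icc.2 hππ
  set μ := MeasureTheory.volume.restrict (Set.Ioo (0:ℝ) (2 * Real.pi)) with hμ
  set Mv : ℝ := (MeasureTheory.eLpNormEssSup V μ).toReal with hMv
  have hVtop : MeasureTheory.eLpNormEssSup V μ ≠ ⊤ := by
    have := hV.2
    rw [MeasureTheory.eLpNorm_exponent_top] at this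
    exact this.ne
  have hMV : ∀ᵐ x ∂μ, ‖V x‖ ≤ Mv := by
    filter_upwards [MeasureTheory.ae_le_eLpNormEssSup (f := V) (μ := μ)] with x hx
    calc ‖V x‖ = ((‖V x‖₊ : ENNReal)).toReal := by simp
      _ ≤ Mv := ENNReal.toReal_mono hVtop hx
  set M : ℝ := |lam| + Mv with hMdef
  have hM : 0 ≤ M := add_nonneg (abs_nonneg _) ENNReal.toReal_nonneg
  set c : ℝ → ℂ := fun x => -Complex.I * ((lam : ℂ) - (starRingEnd ℂ) (V x)) with hcdef
  have hc : ∀ᵐ x ∂μ, ‖c x‖ ≤ M := by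
    filter_upwards [hMV] with x hx
    have h1 : ‖c x‖ = ‖(lam : ℂ) - (starRingEnd ℂ) (V x)‖ := by
      rw [hcdef]; simp [norm_mul]
    rw [h1]
    refine (norm_sub_le _ _).trans ?_
    have h2 : ‖(lam : ℂ)‖ = |lam| := by simp
    have h3 : ‖(starRingEnd ℂ) (V x)‖ = ‖V x‖ := by simp
    rw [h2, h3]
    exact add_le_add le_rfl hx
  have hder₁ : ∀ᵐ x ∂μ, f₁' x = c x * f₁ x := by
    filter_upwards [hadj₁] with x hx
    rw [hcdef]
    linear_combination (-Complex.I) * hx + f₁' x * Complex.I_sq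
  have hder₂ : ∀ᵐ x ∂μ, f₂' x = c x * f₂ x := by
    filter_upwards [hadj₂] with x hx
    rw [hcdef]
    linear_combination (-Complex.I) * hx + f₂' x * Complex.I_sq
  have hb₁ : ∀ᵐ x ∂μ, ‖f₁' x‖ ≤ M * ‖f₁ x‖ := by
    filter_upwards [hder₁, hc] with x h1 h2
    rw [h1, norm_mul]
    exact mul_le_mul_of_nonneg_right h2 (norm_nonneg _)
  have hb₂ : ∀ᵐ x ∂μ, ‖f₂' x‖ ≤ M * ‖f₂ x‖ := by
    filter_upwards [hder₂, hc] with x h1 h2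
    rw [h1, norm_mul]
    exact mul_le_mul_of_nonneg_right h2 (norm_nonneg _)
  have h10 : f₁ 0 ≠ 0 := by
    intro h0
    obtain ⟨x, hx, hne⟩ := hf₁0
    exact hne (vanish_of_zero f₁ f₁' hf₁ M hM hb₁ 0 h0mem h0 x hx)
  have h1T : f₁ (2 * Real.pi) ≠ 0 := by
    intro h0
    obtain ⟨x, hx, hne⟩ := hf₁0
    exact hne (vanish_of_zero f₁ f₁' hf₁ M hM hb₁ (2 * Real.pi) hTmem h0 x hx)
  have h20 : f₂ 0 ≠ 0 := by
    intro h0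
    obtain ⟨x, hx, hne⟩ := hf₂0
    exact hne (vanish_of_zero f₂ f₂' hf₂ M hM hb₂ 0 h0mem h0 x hx)
  have h2T : f₂ (2 * Real.pi) ≠ 0 := by
    intro h0
    obtain ⟨x, hx, hne⟩ := hf₂0
    exact hne (vanish_of_zero f₂ f₂' hf₂ M hM hb₂ (2 * Real.pi) hTmem h0 x hx)
  -- the Wronskian-type combination
  have hgAC : IsACWithDeriv (fun x => f₂ 0 * f₁ x - f₁ 0 * f₂ x)
      (fun x => f₂ 0 * f₁' x - f₁ 0 * f₂' x) := by
    constructor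
    · exact (hf₁.1.const_mul _).sub (hf₂.1.const_mul _)
    · intro x hx
      have i1 : IntervalIntegrable f₁' MeasureTheory.volume 0 x := by
        rw [intervalIntegrable_iff]
        exact hf₁.1.mono_set (Set.Ioc_subset_Ioc (le_min le_rfl hx.1) (max_le hππ hx.2))
      have i2 : IntervalIntegrable f₂' MeasureTheory.volume 0 x := by
        rw [intervalIntegrable_iff]
        exact hf₂.1.mono_set (Set.Ioc_subset_Ioc (le_min le_rfl hx.1) (max_le hππ hx.2))
      have e1 := hf₁.2 x hx
      have e2 := hf₂.2 x hx
      simp only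
      rw [intervalIntegral.integral_sub (i1.const_mul _) (i2.const_mul _),
        intervalIntegral.integral_const_mul, intervalIntegral.integral_const_mul, e1, e2]
      ring
  have hbg : ∀ᵐ x ∂μ, ‖f₂ 0 * f₁' x - f₁ 0 * f₂' x‖ ≤ M * ‖f₂ 0 * f₁ x - f₁ 0 * f₂ x‖ := by
    filter_upwards [hder₁, hder₂, hc] with x d1 d2 hcx
    have h4 : f₂ 0 * f₁' x - f₁ 0 * f₂' x = c x * (f₂ 0 * f₁ x - f₁ 0 * f₂ x) := by
      rw [d1, d2]; ring
    rw [h4, norm_mul]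
    exact mul_le_mul_of_nonneg_right hcx (norm_nonneg _)
  have gzero : ∀ x ∈ Set.Icc (0:ℝ) (2 * Real.pi), f₂ 0 * f₁ x - f₁ 0 * f₂ x = 0 := by
    have := vanish_of_zero _ _ hgAC M hM hbg 0 h0mem (by simp [mul_comm])
    intro x hx
    exact this x hx
  have hT : f₂ 0 * f₁ (2 * Real.pi) = f₁ 0 * f₂ (2 * Real.pi) :=
    sub_eq_zero.mp (gzero (2 * Real.pi) hTmem)
  constructor
  · apply mul_left_cancel₀ (mul_ne_zero h1T h2T)
    linear_combination (-(f₂ (2 * Real.pi))) * hbc₁ + (f₁ (2 * Real.pi)) * hbc₂ - hT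
  · filter_upwards [heq₁, hadj₁, heq₂, hadj₂,
      MeasureTheory.ae_restrict_mem measurableSet_Ioo] with x e1 a1 e2 a2 hx
    have hgx : f₂ 0 * f₁ x = f₁ 0 * f₂ x :=
      sub_eq_zero.mp (gzero x (Set.Ioo_subset_Icc_self hx))
    have r1 : f₁ (2 * Real.pi) * k₁ x = ((starRingEnd ℂ) (V x) - V x) * f₁ x := by
      linear_combination e1 - a1
    have r2 : f₂ (2 * Real.pi) * k₂ x = ((starRingEnd ℂ) (V x) - V x) * f₂ x := by
      linear_combination e2 - a2
    have e3 : f₁ x * f₂ (2 * Real.pi) = f₂ x * f₁ (2 * Real.pi) := by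
      apply mul_left_cancel₀ h20
      linear_combination (f₂ (2 * Real.pi)) * hgx - (f₂ x) * hT
    apply mul_left_cancel₀ (mul_ne_zero h1T h2T)
    linear_combination (f₂ (2 * Real.pi)) * r1 - (f₁ (2 * Real.pi)) * r2
      + ((starRingEnd ℂ) (V x) - V x) * e3
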